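/- In the same setting: ‖ỹ − ŷ‖² ≤ α_max μ τ (−h(ỹ)), where ŷ is the exact minimizer of the strongly convex model h and ỹ is a τ-approximation satisfying h(ỹ) ≤ (2/(2+τ)) h(ŷ). -/

import Mathlib

open Matrix

/-- Action of a matrix on a vector of `EuclideanSpace ℝ (Fin n)`. -/
noncomputable def mulVecE {n : ℕ} (D : Matrix (Fin n) (Fin n) ℝ)
    (v : EuclideanSpace ℝ (Fin n)) : EuclideanSpace ℝ (Fin n) :=
  (WithLp.equiv 2 (Fin n → ℝ)).symm (D *ᵥ fun i => v i)

/-- The quadratic form `⟨v, D v⟩` (i.e. `‖v‖_D²`). -/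
noncomputable def quadE {n : ℕ} (D : Matrix (Fin n) (Fin n) ℝ)
    (v : EuclideanSpace ℝ (Fin n)) : ℝ :=
  (fun i => v i) ⬝ᵥ (D *ᵥ fun i => v i)

lemma quad_expand {n : ℕ} (D : Matrix (Fin n) (Fin n) ℝ) (a b : Fin n → ℝ) (t : ℝ) :
    ((1-t)•a + t•b) ⬝ᵥ D *ᵥ ((1-t)•a + t•b)
      = (1-t)*(a ⬝ᵥ D *ᵥ a) + t*(b ⬝ᵥ D *ᵥ b) - t*(1-t)*((b-a) ⬝ᵥ D *ᵥ (b-a)) := by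
  simp [Matrix.mulVec_add, Matrix.mulVec_smul, Matrix.mulVec_sub, dotProduct_add,
    add_dotProduct, sub_dotProduct, dotProduct_sub, smul_dotProduct, dotProduct_smul,
    smul_eq_mul]
  ring


set_option maxHeartbeats 1000000 in
theorem stmt7 {n : ℕ} (f : EuclideanSpace ℝ (Fin n) → ℝ) (hf : ContDiff ℝ 1 f)
    (φ : EuclideanSpace ℝ (Fin n) → ℝ) (hconv : ConvexOn ℝ Set.univ φ)
    (hlsc : LowerSemicontinuous φ)
    (α αmax β τ μ : ℝ) (hα : 0 < α) (hαmax : α ≤ αmax) (hβ : 0 < β) (hτ : 0 ≤ τ) (hμ : 0 < μ)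
    (D : Matrix (Fin n) (Fin n) ℝ) (hsym : D.IsSymm) (hpd : D.PosDef)
    (hlow : ∀ v : Fin n → ℝ, (1/μ) * (v ⬝ᵥ v) ≤ v ⬝ᵥ (D *ᵥ v))
    (hup : ∀ v : Fin n → ℝ, v ⬝ᵥ (D *ᵥ v) ≤ μ * (v ⬝ᵥ v))
    (x w : EuclideanSpace ℝ (Fin n))
    (h : EuclideanSpace ℝ (Fin n) → ℝ)
    (hh : h = fun y => (inner ℝ (gradient f x - (β/α) • mulVecE D (x - w)) (y - x) : ℝ)
      + (1/(2*α)) * quadE D (y - x) + φ y - φ x)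
    (yhat ytil : EuclideanSpace ℝ (Fin n)) (hmin : IsMinOn h Set.univ yhat)
    (happrox : h ytil ≤ (2/(2+τ)) * h yhat) :
    ‖ytil - yhat‖^2 ≤ αmax * μ * τ * (-h ytil) := by
  have dp_nonneg : ∀ v : Fin n → ℝ, 0 ≤ v ⬝ᵥ v := by
    intro v
    exact Finset.sum_nonneg fun i _ => mul_self_nonneg (v i)
  have q_nonneg : ∀ v : EuclideanSpace ℝ (Fin n), 0 ≤ quadE D v := by
    intro v
    show (0:ℝ) ≤ (fun i => v i) ⬝ᵥ (D *ᵥ fun i => v i)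
    refine le_trans ?_ (hlow fun i => v i)
    exact mul_nonneg (by positivity) (dp_nonneg _)
  set c : ℝ := 1/(2*α) with hc
  have hcpos : 0 < c := by positivity
  -- strong convexity of h
  have strong : ∀ y : EuclideanSpace ℝ (Fin n),
      c * quadE D (y - yhat) ≤ h y - h yhat := by
    intro y
    set Q : ℝ := quadE D (y - yhat) with hQ
    have hQ0 : 0 ≤ Q := q_nonneg _
    have P : ∀ t : ℝ, 0 < t → t < 1 → (1-t) * (c * Q) ≤ h y - h yhat := by
      intro t ht0 ht1
      set yt : EuclideanSpace ℝ (Fin n) := (1-t) • yhat + t • y with hyt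
      have hmem : h yhat ≤ h yt := isMinOn_iff.mp hmin yt (Set.mem_univ _)
      have hφ : φ yt ≤ (1-t) * φ yhat + t * φ y := by
        have := hconv.2 (Set.mem_univ yhat) (Set.mem_univ y)
          (by linarith : (0:ℝ) ≤ 1 - t) (le_of_lt ht0) (by ring)
        simpa [smul_eq_mul] using this
      have hdec : yt - x = (1-t) • (yhat - x) + t • (y - x) := by
        rw [hyt]; module
      have hinner : (inner ℝ (gradient f x - (β/α) • mulVecE D (x - w)) (yt - x) : ℝ)
          = (1-t) * (inner ℝ (gradient f x - (β/α) • mulVecE D (x - w)) (yhat - x) : ℝ)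
            + t * (inner ℝ (gradient f x - (β/α) • mulVecE D (x - w)) (y - x) : ℝ) := by
        rw [hdec, inner_add_right, real_inner_smul_right, real_inner_smul_right]
      have hquad : quadE D (yt - x)
          = (1-t) * quadE D (yhat - x) + t * quadE D (y - x) - t*(1-t) * Q := by
        have e1 : (fun i => (yt - x) i)
            = (1-t) • (fun i => (yhat - x) i) + t • (fun i => (y - x) i) := by
          funext i
          simp only [hyt]
          show ((1-t) • yhat + t • y) i - x i = _
          simp [Pi.add_apply, Pi.smul_apply, smul_eq_mul]
          ring
        have e2 : (fun i => (y - yhat) i)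
            = (fun i => (y - x) i) - (fun i => (yhat - x) i) := by
          funext i
          show y i - yhat i = (y i - x i) - (yhat i - x i)
          ring
        simp only [quadE, hQ, e1, e2]
        exact quad_expand D _ _ t
      -- upper bound for h yt
      have hub : h yt ≤ (1-t) * h yhat + t * h y - t*(1-t) * (c * Q) := by
        simp only [hh]
        rw [hinner, hquad]
        nlinarith [hφ]
      have : t * ((1-t) * (c * Q)) ≤ t * (h y - h yhat) := by nlinarith [hmem, hub]
      exact le_of_mul_le_mul_left (by linarith [this]) ht0
    by_contra hcon
    push_neg at hcon
    rcases lt_or_ge 0 (c * Q) with hCpos | hCnp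
    · have hΔ : 0 ≤ h y - h yhat := by
        have := P (1/2) (by norm_num) (by norm_num)
        nlinarith
      set t0 : ℝ := (c*Q - (h y - h yhat)) / (2 * (c*Q)) with ht0def
      have ht0pos : 0 < t0 := by
        apply div_pos (by linarith) (by linarith)
      have ht0lt : t0 < 1 := by
        rw [div_lt_one (by linarith)]
        linarith
      have := P t0 ht0pos ht0lt
      have hexp : (1 - t0) * (c*Q) = (c*Q + (h y - h yhat)) / 2 := by
        rw [ht0def]
        have hQne : Q ≠ 0 := right_ne_zero_of_mul hCpos.ne'
        field_simp [hcpos.ne', hQne]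
        ring
      rw [hexp] at this
      linarith
    · have := P (1/2) (by norm_num) (by norm_num)
      nlinarith
  -- h x = 0
  have hx0 : h x = 0 := by
    simp only [hh, sub_self]
    have : quadE D (0 : EuclideanSpace ℝ (Fin n)) = 0 := by
      simp [quadE]
    simp [this]
  have hyhat0 : h yhat ≤ 0 := by
    have := isMinOn_iff.mp hmin x (Set.mem_univ _)
    linarith [this, hx0.le]
  have h2τ : (0:ℝ) < 2 + τ := by linarith
  have hytil0 : h ytil ≤ 0 := by
    refine happrox.trans ?_
    have : 0 ≤ 2/(2+τ) := by positivity
    exact mul_nonpos_of_nonneg_of_nonpos this hyhat0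
  have hkey : (2+τ) * h ytil ≤ 2 * h yhat := by
    have := mul_le_mul_of_nonneg_left happrox h2τ.le
    calc (2+τ) * h ytil ≤ (2+τ) * ((2/(2+τ)) * h yhat) := this
    _ = 2 * h yhat := by field_simp
  -- norm bound
  have hnorm : ‖ytil - yhat‖^2 ≤ μ * quadE D (ytil - yhat) := by
    have hne : ‖ytil - yhat‖^2 = (fun i => (ytil - yhat) i) ⬝ᵥ (fun i => (ytil - yhat) i) := by
      rw [EuclideanSpace.norm_eq]
      rw [Real.sq_sqrt (Finset.sum_nonneg fun i _ => sq_nonneg _)]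
      simp [dotProduct, Real.norm_eq_abs, sq_abs, sq]
    rw [hne]
    have := hlow fun i => (ytil - yhat) i
    have hq : quadE D (ytil - yhat) = (fun i => (ytil - yhat) i) ⬝ᵥ (D *ᵥ fun i => (ytil - yhat) i) := rfl
    rw [hq]
    rw [div_mul_eq_mul_div, one_mul, div_le_iff₀ hμ] at this
    nlinarith [this]
  have hsc := strong ytil
  have hqnn := q_nonneg (ytil - yhat)
  -- combine: c * Q ≤ h ytil - h yhat ≤ -(τ/2) h ytil ; Q ≤ α τ (-h ytil)
  have hQle : quadE D (ytil - yhat) ≤ α * τ * (-h ytil) := by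
    have h1 : c * quadE D (ytil - yhat) ≤ (τ/2) * (-h ytil) := by
      nlinarith [hsc, hkey]
    have : quadE D (ytil - yhat) = (2*α) * (c * quadE D (ytil - yhat)) := by
      rw [hc]; field_simp
    rw [this]
    calc (2*α) * (c * quadE D (ytil - yhat)) ≤ (2*α) * ((τ/2) * (-h ytil)) := by
          apply mul_le_mul_of_nonneg_left h1 (by positivity)
    _ = α * τ * (-h ytil) := by ring
  calc ‖ytil - yhat‖^2 ≤ μ * quadE D (ytil - yhat) := hnorm
  _ ≤ μ * (α * τ * (-h ytil)) := by
      apply mul_le_mul_of_nonneg_left hQle hμ.le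
  _ ≤ αmax * μ * τ * (-h ytil) := by
      have hnn : 0 ≤ μ * τ * (-h ytil) :=
        mul_nonneg (mul_nonneg hμ.le hτ) (by linarith)
      have := mul_le_mul_of_nonneg_right hαmax hnn
      nlinarith [this]
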